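/- Let p : E → B be a covering map with B path-connected, locally path-connected, and semi-locally simply connected, and let b ∈ B. Then the monodromy action of π₁(B, b) on the fiber p⁻¹(b) determines the covering up to isomorphism: two coverings of B are isomorphic if and only if their monodromy representations on the fibers are isomorphic as π₁(B, b)-sets. -/

import Mathlib

open unitInterval

/-- `X` is semi-locally simply connected: every point has a neighbourhood in which every
loop at that point is null-homotopic in `X`. -/
def SemiLocallySimplyConnected (X : Type*) [TopologicalSpace X] : Prop :=
  ∀ x : X, ∃ U ∈ nhds x, ∀ γ : Path x x, (∀ t, γ t ∈ U) → γ.Homotopic (Path.refl x)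

/-- `Transports p γ e e'`: the (unique) lift of the path `γ` through `p` starting at `e`
ends at `e'`.  This encodes the monodromy action on fibers. -/
def Transports {E B : Type*} [TopologicalSpace E] [TopologicalSpace B]
    (p : E → B) {b b' : B} (γ : Path b b') (e e' : E) : Prop :=
  ∃ Γ : C(I, E), Γ 0 = e ∧ Γ 1 = e' ∧ ∀ t, p (Γ t) = γ t


section Lifting
variable {E B : Type*} [TopologicalSpace E] [TopologicalSpace B] {p : E → B}

lemma transports_proj_left {b b' : B} {γ : Path b b'} {e e' : E}
    (h : Transports p γ e e') : p e = b := by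
  obtain ⟨Γ, h0, _, hΓ⟩ := h
  rw [← h0, hΓ 0, γ.source]

lemma transports_proj_right {b b' : B} {γ : Path b b'} {e e' : E}
    (h : Transports p γ e e') : p e' = b' := by
  obtain ⟨Γ, _, h1, hΓ⟩ := h
  rw [← h1, hΓ 1, γ.target]

lemma transports_refl {x : B} {e : E} (he : p e = x) : Transports p (Path.refl x) e e :=
  ⟨ContinuousMap.const I e, rfl, rfl, fun t => by simp [he]⟩

lemma Transports.symm {b b' : B} {γ : Path b b'} {e e' : E}
    (h : Transports p γ e e') : Transports p γ.symm e' e := by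
  obtain ⟨Γ, h0, h1, hΓ⟩ := h
  refine ⟨⟨fun t => Γ (σ t), Γ.continuous.comp continuous_symm⟩, ?_, ?_, fun t => ?_⟩
  · simpa using h1
  · simpa using h0
  · show p (Γ (σ t)) = γ.symm t
    rw [hΓ (σ t)]
    rfl

lemma Transports.trans {x y z : B} {γ : Path x y} {γ' : Path y z} {e e' e'' : E}
    (h : Transports p γ e e') (h' : Transports p γ' e' e'') :
    Transports p (γ.trans γ') e e'' := by
  obtain ⟨Γ, h0, h1, hΓ⟩ := h
  obtain ⟨Γ', h0', h1', hΓ'⟩ := h'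
  let P : Path e e' := ⟨Γ, h0, h1⟩
  let P' : Path e' e'' := ⟨Γ', h0', h1'⟩
  refine ⟨(P.trans P').toContinuousMap, by simp, by simp, fun t => ?_⟩
  show p ((P.trans P') t) = (γ.trans γ') t
  rw [Path.trans_apply, Path.trans_apply]
  split
  · exact hΓ _
  · exact hΓ' _

lemma Transports.cast {b b' c c' : B} {γ : Path b b'} {e e' : E}
    (h : Transports p γ e e') (hc : c = b) (hc' : c' = b') :
    Transports p (γ.cast hc hc') e e' := h

lemma triv_section {F : Type*} [TopologicalSpace F] (T : Bundle.Trivialization F p) (e : E)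
    (he : e ∈ T.source) :
    ∃ s : B → E, ContinuousOn s T.baseSet ∧ (∀ y ∈ T.baseSet, p (s y) = y) ∧
      s (p e) = e ∧ ∀ y ∈ T.baseSet, T (s y) = (y, (T e).2) := by
  refine ⟨fun y => T.toOpenPartialHomeomorph.symm (y, (T e).2), ?_, ?_, ?_, ?_⟩
  · exact T.toOpenPartialHomeomorph.continuousOn_symm.comp
      (continuous_id.prodMk continuous_const).continuousOn
      (fun y hy => T.mem_target.2 hy)
  · intro y hy
    exact T.proj_symm_apply (T.mem_target.2 hy)
  · show T.toOpenPartialHomeomorph.symm (p e, (T e).2) = e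
    have h2 : ((p e), (T e).2) = T e := Prod.ext (T.coe_fst he).symm rfl
    rw [h2]
    exact T.toOpenPartialHomeomorph.left_inv he
  · intro y hy
    have := T.toOpenPartialHomeomorph.right_inv (T.mem_target (x := (y, (T e).2)) |>.2 hy)
    rw [Bundle.Trivialization.coe_coe] at this
    exact this

theorem transports_unique (hp : IsCoveringMap p) {b b' : B} {γ : Path b b'} {e e₁ e₂ : E}
    (h1 : Transports p γ e e₁) (h2 : Transports p γ e e₂) : e₁ = e₂ := by
  obtain ⟨Γ, g0, g1, gp⟩ := h1
  obtain ⟨Δ, d0, d1, dp⟩ := h2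
  have h := hp.eq_of_comp_eq (g₁ := ⇑Γ) (g₂ := ⇑Δ) Γ.continuous Δ.continuous
    (funext fun t => by simp only [Function.comp_apply, gp t, dp t]) 0 (g0.trans d0.symm)
  rw [← g1, ← d1, h]

end Lifting

theorem IsCoveringMap.exists_transports {E B : Type*} [TopologicalSpace E] [TopologicalSpace B]
    {p : E → B} (hp : IsCoveringMap p) {x y : B} (γ : Path x y)
    (e : E) (he : p e = x) : ∃ e', Transports p γ e e' := by
  classical
  set A : Set ℝ := {t : ℝ | ∃ ht : t ∈ Set.Icc (0:ℝ) 1, ∃ Γ : C(I, E), Γ 0 = e ∧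
    ∀ s : I, (s : ℝ) ≤ t → p (Γ s) = γ s} with hA
  have h0A : (0:ℝ) ∈ A := by
    refine ⟨⟨le_refl 0, zero_le_one⟩, ContinuousMap.const I e, rfl, fun s hs => ?_⟩
    have hs0 : s = 0 := by
      ext; exact le_antisymm hs s.2.1
    rw [hs0]
    simpa using he
  have hbdd : BddAbove A := ⟨1, fun t ht => ht.1.2⟩
  set u : ℝ := sSup A with hu
  have huA : IsLUB A u := isLUB_csSup ⟨0, h0A⟩ hbdd
  have hu0 : 0 ≤ u := huA.1 h0A
  have hu1 : u ≤ 1 := huA.2 (fun t ht => ht.1.2)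
  set uI : I := ⟨u, hu0, hu1⟩ with huI
  haveI : Nonempty (p ⁻¹' {γ uI}) := by
    obtain ⟨Γ, hΓ, _⟩ := hp.exists_path_lifts γ.toContinuousMap e (by simp [he])
    exact ⟨⟨Γ uI, congr_fun hΓ uI⟩⟩
  set T := (hp (γ uI)).toTrivialization with hT
  have hbase : γ uI ∈ T.baseSet := IsEvenlyCovered.mem_toTrivialization_baseSet _
  have hnhds : γ ⁻¹' T.baseSet ∈ nhds uI :=
    γ.continuous.continuousAt.preimage_mem_nhds (T.open_baseSet.mem_nhds hbase)
  obtain ⟨ε, hε, hball⟩ := Metric.mem_nhds_iff.mp hnhds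
  have hclose : u ∈ closure A := huA.mem_closure ⟨0, h0A⟩
  obtain ⟨t, htA, htd⟩ := Metric.mem_closure_iff.mp hclose ε hε
  have htu : t ≤ u := huA.1 htA
  obtain ⟨htI, Γ₁, hΓ₁0, hΓ₁⟩ := htA
  have htd' : u - t < ε := by
    rw [Real.dist_eq] at htd
    have := abs_lt.mp htd
    linarith [this.2]
  set tI : I := ⟨t, htI⟩ with htI'
  set u' : ℝ := min (u + ε/2) 1 with hu'
  have huu' : u ≤ u' := le_min (by linarith) hu1
  have hu'I : u' ∈ Set.Icc (0:ℝ) 1 := ⟨le_trans hu0 huu', min_le_right _ _⟩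
  have htu' : t ≤ u' := le_trans htu huu'
  have hmem : ∀ s : I, t ≤ (s:ℝ) → (s:ℝ) ≤ u' → γ s ∈ T.baseSet := by
    intro s h1 h2
    apply hball
    rw [Metric.mem_ball, Subtype.dist_eq, Real.dist_eq]
    have h3 : (s:ℝ) - u ≤ ε/2 := by
      have := min_le_left (u + ε/2) 1
      have h2' : (s:ℝ) ≤ u + ε/2 := le_trans h2 (min_le_left _ _)
      linarith
    rw [abs_sub_lt_iff]
    constructor <;> linarith
  have hγt : γ tI ∈ T.baseSet := hmem tI le_rfl htu'
  have hsrc : Γ₁ tI ∈ T.source := T.mem_source.2 (by rw [hΓ₁ tI le_rfl]; exact hγt)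
  obtain ⟨sec, hsec_cont, hsec_proj, hsec_pt, _⟩ := triv_section T (Γ₁ tI) hsrc
  have hsec_t : sec (γ tI) = Γ₁ tI := by
    rw [← hΓ₁ tI le_rfl]
    exact hsec_pt
  -- clamp
  set clamp : I → I := fun s => ⟨max t (min (s:ℝ) u'),
    le_trans htI.1 (le_max_left _ _),
    max_le htI.2 (le_trans (min_le_right _ _) hu'I.2)⟩ with hclamp
  have hclamp_cont : Continuous clamp :=
    (continuous_const.max (continuous_subtype_val.min continuous_const)).subtype_mk _
  have hclamp_mem : ∀ s : I, γ (clamp s) ∈ T.baseSet := fun s =>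
    hmem _ (le_max_left _ _) (max_le htu' (min_le_right _ _))
  -- the extended lift
  set f₂ : I → E := fun s => if (s:ℝ) ≤ t then Γ₁ s else sec (γ (clamp s)) with hf₂
  have hcont₂ : Continuous f₂ := by
    refine Continuous.if_le ?_ ?_ continuous_subtype_val continuous_const ?_
    · exact Γ₁.continuous
    · exact hsec_cont.comp_continuous (γ.continuous.comp hclamp_cont) hclamp_mem
    · intro s hs
      have hst : s = tI := Subtype.ext hs
      have hcl : clamp s = s := by
        apply Subtype.ext
        show max t (min (s:ℝ) u') = (s:ℝ)
        rw [hs, min_eq_left htu', max_self]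
      show Γ₁ s = sec (γ (clamp s))
      rw [hcl, hst, hsec_t]
  set Γ₂ : C(I, E) := ⟨f₂, hcont₂⟩ with hΓ₂
  have hΓ₂0 : Γ₂ 0 = e := by
    show (if ((0:I):ℝ) ≤ t then Γ₁ 0 else sec (γ (clamp 0))) = e
    rw [if_pos (show ((0:I):ℝ) ≤ t from htI.1)]
    exact hΓ₁0
  have hΓ₂lift : ∀ s : I, (s:ℝ) ≤ u' → p (Γ₂ s) = γ s := by
    intro s hs
    show p (if (s:ℝ) ≤ t then Γ₁ s else sec (γ (clamp s))) = γ s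
    by_cases hst : (s:ℝ) ≤ t
    · rw [if_pos hst]
      exact hΓ₁ s hst
    · rw [if_neg hst]
      push_neg at hst
      have hcl : clamp s = s := by
        ext
        show max t (min (s:ℝ) u') = (s:ℝ)
        rw [min_eq_left hs, max_eq_right hst.le]
      rw [hcl]
      exact hsec_proj _ (hmem s hst.le hs)
  have hu'A : u' ∈ A := ⟨hu'I, Γ₂, hΓ₂0, hΓ₂lift⟩
  have hu'le : u' ≤ u := huA.1 hu'A
  have hueq : u = 1 := by
    by_contra h
    have hu_lt : u < 1 := lt_of_le_of_ne hu1 h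
    have : u < u' := lt_min (by linarith) hu_lt
    linarith
  have hu'1 : u' = 1 := le_antisymm hu'I.2 (hueq ▸ huu')
  exact ⟨Γ₂ 1, Γ₂, hΓ₂0, rfl, fun s => hΓ₂lift s (hu'1 ▸ s.2.2)⟩

lemma transports_of_section {E B : Type*} [TopologicalSpace E] [TopologicalSpace B] {p : E → B}
    {U : Set B} {s : B → E} (hs : ContinuousOn s U)
    (hps : ∀ y ∈ U, p (s y) = y) {x y : B} (γ : Path x y) (hγ : ∀ t, γ t ∈ U) :
    Transports p γ (s x) (s y) :=
  ⟨⟨fun t => s (γ t), hs.comp_continuous γ.continuous hγ⟩,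
    by simp, by simp, fun t => hps _ (hγ t)⟩

lemma exists_lift_map {B E₁ E₂ : Type*} [TopologicalSpace B] [TopologicalSpace E₁]
    [TopologicalSpace E₂] [PathConnectedSpace B] [LocallyPathConnectedSpace B]
    {p₁ : E₁ → B} {p₂ : E₂ → B} (h₁ : IsCoveringMap p₁) (h₂ : IsCoveringMap p₂) (b : B)
    (ψ : (p₁ ⁻¹' {b}) → (p₂ ⁻¹' {b}))
    (hψ : ∀ (γ : Path b b) (e e' : p₁ ⁻¹' {b}),
        Transports p₁ γ (e : E₁) (e' : E₁) → Transports p₂ γ ((ψ e : E₂)) ((ψ e' : E₂))) :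
    ∃ φ : E₁ → E₂, Continuous φ ∧ (∀ e, p₂ (φ e) = p₁ e) ∧
      (∀ e : p₁ ⁻¹' {b}, φ (e : E₁) = (ψ e : E₂)) ∧
      ∀ {x y : B} (γ : Path x y) (e e' : E₁),
        Transports p₁ γ e e' → Transports p₂ γ (φ e) (φ e') := by
  classical
  have hδ : ∀ e : E₁, ∃ (δ : Path b (p₁ e)) (e₀ : p₁ ⁻¹' {b}), Transports p₁ δ (e₀ : E₁) e := by
    intro e
    set δ : Path b (p₁ e) := (PathConnectedSpace.joined b (p₁ e)).somePath with hδ'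
    obtain ⟨f₀, h0⟩ := h₁.exists_transports δ.symm e rfl
    have h1 := h0.symm
    rw [Path.symm_symm] at h1
    exact ⟨δ, ⟨f₀, transports_proj_right h0⟩, h1⟩
  choose δ e₀ hδ₀ using hδ
  choose φ hφ using fun e => h₂.exists_transports (δ e) ((ψ (e₀ e)) : E₂) (ψ (e₀ e)).2
  have hproj : ∀ e, p₂ (φ e) = p₁ e := fun e => transports_proj_right (hφ e)
  -- well-definedness
  have wd : ∀ (e : E₁) {c : B} (δ' : Path b c) (f₀ : p₁ ⁻¹' {b}) (g : E₂),
      Transports p₁ δ' (f₀ : E₁) e → Transports p₂ δ' ((ψ f₀ : E₂)) g → φ e = g := by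
    intro e c δ' f₀ g hE hG
    have hc : p₁ e = c := transports_proj_right hE
    set δ'' : Path b (p₁ e) := δ'.cast rfl hc with hδ''
    have hE' : Transports p₁ δ'' (f₀ : E₁) e := hE.cast rfl hc
    have h1 : Transports p₁ ((δ e).trans δ''.symm) ((e₀ e) : E₁) (f₀ : E₁) :=
      (hδ₀ e).trans hE'.symm
    have h2 := hψ _ (e₀ e) f₀ h1
    obtain ⟨w, hw⟩ := h₂.exists_transports δ''.symm (φ e) (hproj e)
    have h3 : Transports p₂ ((δ e).trans δ''.symm) ((ψ (e₀ e)) : E₂) w := (hφ e).trans hw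
    have hwf : w = (ψ f₀ : E₂) := transports_unique h₂ h3 h2
    rw [hwf] at hw
    have hw2 := hw.symm
    rw [Path.symm_symm] at hw2
    have hw3 : Transports p₂ δ' ((ψ f₀ : E₂)) (φ e) := hw2
    exact (transports_unique h₂ hG hw3).symm
  -- fiber compatibility
  have hfiber : ∀ e : p₁ ⁻¹' {b}, φ (e : E₁) = (ψ e : E₂) := fun e =>
    wd (e : E₁) (Path.refl b) e (ψ e : E₂) (transports_refl e.2) (transports_refl (ψ e).2)
  -- intertwining
  have hinter : ∀ {x y : B} (γ : Path x y) (e e' : E₁),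
      Transports p₁ γ e e' → Transports p₂ γ (φ e) (φ e') := by
    intro x y γ e e' hT
    have hx : p₁ e = x := transports_proj_left hT
    set γ' : Path (p₁ e) y := γ.cast hx rfl with hγ'
    have hT' : Transports p₁ γ' e e' := hT.cast hx rfl
    have hE' : Transports p₁ ((δ e).trans γ') ((e₀ e) : E₁) e' := (hδ₀ e).trans hT'
    obtain ⟨w, hw⟩ := h₂.exists_transports γ' (φ e) (hproj e)
    have hG' : Transports p₂ ((δ e).trans γ') ((ψ (e₀ e)) : E₂) w := (hφ e).trans hw
    have hwe : φ e' = w := wd e' ((δ e).trans γ') (e₀ e) w hE' hG'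
    rw [hwe]
    exact hw
  -- continuity
  have hcont : Continuous φ := by
    rw [continuous_iff_continuousAt]
    intro e
    set x := p₁ e with hx
    haveI : Nonempty (p₁ ⁻¹' {x}) := ⟨⟨e, rfl⟩⟩
    haveI : Nonempty (p₂ ⁻¹' {x}) := ⟨⟨φ e, hproj e⟩⟩
    set T₁ := (h₁ x).toTrivialization with hT₁
    set T₂ := (h₂ x).toTrivialization with hT₂
    have hb₁ : x ∈ T₁.baseSet := IsEvenlyCovered.mem_toTrivialization_baseSet _
    have hb₂ : x ∈ T₂.baseSet := IsEvenlyCovered.mem_toTrivialization_baseSet _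
    set U₀ := T₁.baseSet ∩ T₂.baseSet with hU₀
    have hU₀open : IsOpen U₀ := T₁.open_baseSet.inter T₂.open_baseSet
    set U := pathComponentIn U₀ x with hU
    have hUopen : IsOpen U := hU₀open.pathComponentIn x
    have hxU : x ∈ U := mem_pathComponentIn_self ⟨hb₁, hb₂⟩
    haveI : DiscreteTopology (p₁ ⁻¹' {x}) := (h₁ x).1
    set W := T₁.source ∩ (Prod.snd ∘ T₁) ⁻¹' {(T₁ e).2} with hW
    have hWopen : IsOpen W := T₁.continuousOn_toFun.isOpen_inter_preimage T₁.open_source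
        (continuous_snd.isOpen_preimage _ (isOpen_discrete _))
    have heW : e ∈ W := ⟨T₁.mem_source.2 hb₁, rfl⟩
    set V := p₁ ⁻¹' U ∩ W with hV
    have hVopen : IsOpen V := (hUopen.preimage h₁.continuous).inter hWopen
    have heV : e ∈ V := ⟨hxU, heW⟩
    have hφe : φ e ∈ T₂.source := T₂.mem_source.2 (by rw [hproj e]; exact hb₂)
    obtain ⟨s₂, hs₂cont, hs₂proj, hs₂pt, _⟩ := triv_section T₂ (φ e) hφe
    have hs₂x : s₂ x = φ e := by rw [hx, ← hproj e]; exact hs₂pt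
    obtain ⟨s₁, hs₁cont, hs₁proj, hs₁pt, hs₁T⟩ := triv_section T₁ e (T₁.mem_source.2 hb₁)
    have hs₁x : s₁ x = e := by rw [hx]; exact hs₁pt
    have key : ∀ e' ∈ V, φ e' = s₂ (p₁ e') := by
      intro e' he'
      obtain ⟨he'U, he'src, he'snd⟩ := he'
      have he'U₀ : p₁ e' ∈ U₀ := pathComponentIn_subset he'U
      have he'base : p₁ e' ∈ T₁.baseSet := he'U₀.1
      obtain ⟨β, hβ⟩ : JoinedIn U₀ x (p₁ e') := he'U
      have ht₁ : Transports p₁ β (s₁ x) (s₁ (p₁ e')) :=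
        transports_of_section hs₁cont hs₁proj β (fun t => (hβ t).1)
      rw [hs₁x] at ht₁
      have hmem₁ : s₁ (p₁ e') ∈ T₁.source :=
        T₁.mem_source.2 (by rw [hs₁proj _ he'base]; exact he'base)
      have h1' : s₁ (p₁ e') = e' := by
        apply T₁.injOn hmem₁ he'src
        show (T₁ : Bundle.Trivialization _ p₁) (s₁ (p₁ e')) = (T₁ : Bundle.Trivialization _ p₁) e'
        rw [hs₁T _ he'base]
        refine Prod.ext ?_ ?_
        · exact (T₁.coe_fst he'src).symm
        · exact (Set.eq_of_mem_singleton he'snd).symm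
      rw [h1'] at ht₁
      have hT2 : Transports p₂ β (φ e) (φ e') := hinter β e e' ht₁
      have ht₂ : Transports p₂ β (s₂ x) (s₂ (p₁ e')) :=
        transports_of_section hs₂cont hs₂proj β (fun t => (hβ t).2)
      rw [hs₂x] at ht₂
      exact transports_unique h₂ hT2 ht₂
    have hca : ContinuousAt (fun e' => s₂ (p₁ e')) e := by
      apply ContinuousAt.comp
      · exact hs₂cont.continuousAt (T₂.open_baseSet.mem_nhds (hx ▸ hb₂))
      · exact h₁.continuous.continuousAt
    have hev : φ =ᶠ[nhds e] fun e' => s₂ (p₁ e') :=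
      Filter.eventuallyEq_of_mem (hVopen.mem_nhds heV) key
    exact hca.congr hev.symm
  exact ⟨φ, hcont, hproj, hfiber, hinter⟩

/-- for coverings of a path-connected, locally path-connected,
semi-locally simply connected base `B`, the monodromy action of `π₁(B, b)` on the fiber
determines the covering: two coverings are isomorphic (homeomorphic over `B`) if and only
if their fibers over `b` are isomorphic as `π₁(B, b)`-sets, i.e. there is an
equivariant bijection of the fibers intertwining the monodromy (path-lifting) actions. -/
theorem covering_classified_by_monodromy
    {B E₁ E₂ : Type*} [TopologicalSpace B] [TopologicalSpace E₁] [TopologicalSpace E₂]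
    [PathConnectedSpace B] [LocallyPathConnectedSpace B]
    (hB : SemiLocallySimplyConnected B)
    (p₁ : E₁ → B) (p₂ : E₂ → B) (h₁ : IsCoveringMap p₁) (h₂ : IsCoveringMap p₂)
    (b : B) :
    (∃ φ : E₁ ≃ₜ E₂, ∀ e, p₂ (φ e) = p₁ e) ↔
    (∃ ψ : (p₁ ⁻¹' {b}) ≃ (p₂ ⁻¹' {b}),
      ∀ (γ : Path b b) (e e' : p₁ ⁻¹' {b}),
        Transports p₁ γ (e : E₁) (e' : E₁) →
        Transports p₂ γ ((ψ e : E₂)) ((ψ e' : E₂))) := by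
  constructor
  · rintro ⟨φ, hφ⟩
    refine ⟨⟨fun e => ⟨φ e, show p₂ (φ (e : E₁)) ∈ {b} by rw [hφ]; exact Set.mem_preimage.mp e.2⟩,
      fun f => ⟨φ.symm f, show p₁ (φ.symm (f : E₂)) ∈ {b} by
        have h := hφ (φ.symm (f : E₂))
        rw [φ.apply_symm_apply] at h
        rw [← h]; exact Set.mem_preimage.mp f.2⟩,
      fun e => Subtype.ext (φ.symm_apply_apply _),
      fun f => Subtype.ext (φ.apply_symm_apply _)⟩, ?_⟩
    rintro γ e e' ⟨Γ, h0, h1, hΓ⟩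
    exact ⟨⟨fun t => φ (Γ t), φ.continuous.comp Γ.continuous⟩,
      by simp [h0], by simp [h1], fun t => by show p₂ (φ (Γ t)) = γ t; rw [hφ, hΓ]⟩
  · rintro ⟨ψ, hψ⟩
    obtain ⟨φ, hφc, hφp, hφf, hφi⟩ := exists_lift_map h₁ h₂ b ψ hψ
    have hψ' : ∀ (γ : Path b b) (f f' : p₂ ⁻¹' {b}),
        Transports p₂ γ (f : E₂) (f' : E₂) →
        Transports p₁ γ ((ψ.symm f : E₁)) ((ψ.symm f' : E₁)) := by
      intro γ f f' hT
      obtain ⟨g, hg⟩ := h₁.exists_transports γ ((ψ.symm f : E₁)) (ψ.symm f).2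
      have hgmem : g ∈ p₁ ⁻¹' {b} := transports_proj_right hg
      have h2 := hψ γ (ψ.symm f) ⟨g, hgmem⟩ hg
      rw [Equiv.apply_symm_apply] at h2
      have h3 : ψ ⟨g, hgmem⟩ = f' := Subtype.ext (transports_unique h₂ h2 hT)
      rw [← h3, Equiv.symm_apply_apply]
      exact hg
    obtain ⟨χ, hχc, hχp, hχf, hχi⟩ := exists_lift_map h₂ h₁ b ψ.symm hψ'
    have hleft : ∀ e, χ (φ e) = e := by
      intro e
      set δ : Path b (p₁ e) := (PathConnectedSpace.joined b (p₁ e)).somePath with hδ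
      obtain ⟨g, hg⟩ := h₁.exists_transports δ.symm e rfl
      have hg' := hg.symm
      rw [Path.symm_symm] at hg'
      have hgmem : g ∈ p₁ ⁻¹' {b} := transports_proj_right hg
      have h1 : Transports p₂ δ (φ g) (φ e) := hφi δ g e hg'
      have h2 : Transports p₁ δ (χ (φ g)) (χ (φ e)) := hχi δ (φ g) (φ e) h1
      have h3 : χ (φ g) = g := by
        have h4 : φ g = (ψ ⟨g, hgmem⟩ : E₂) := hφf ⟨g, hgmem⟩
        rw [h4, hχf (ψ ⟨g, hgmem⟩), Equiv.symm_apply_apply]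
      rw [h3] at h2
      exact transports_unique h₁ h2 hg'
    have hright : ∀ f, φ (χ f) = f := by
      intro f
      set δ : Path b (p₂ f) := (PathConnectedSpace.joined b (p₂ f)).somePath with hδ
      obtain ⟨g, hg⟩ := h₂.exists_transports δ.symm f rfl
      have hg' := hg.symm
      rw [Path.symm_symm] at hg'
      have hgmem : g ∈ p₂ ⁻¹' {b} := transports_proj_right hg
      have h1 : Transports p₁ δ (χ g) (χ f) := hχi δ g f hg'
      have h2 : Transports p₂ δ (φ (χ g)) (φ (χ f)) := hφi δ (χ g) (χ f) h1
      have h3 : φ (χ g) = g := by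
        have h4 : χ g = (ψ.symm ⟨g, hgmem⟩ : E₁) := hχf ⟨g, hgmem⟩
        rw [h4, hφf (ψ.symm ⟨g, hgmem⟩), Equiv.apply_symm_apply]
      rw [h3] at h2
      exact transports_unique h₂ h2 hg'
    exact ⟨⟨⟨φ, χ, hleft, hright⟩, hφc, hχc⟩, hφp⟩
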